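/- Let σ be a random full ranking of n items drawn from the Plackett–Luce model with parameter θ ∈ ℝ^n satisfying ‖θ‖_∞ ≤ B. Then for any two distinct items i and j and any δ ∈ [0,1), the probability that min{σ(i), σ(j)} ≥ δ·n is at least 1 − 2e^{3B}·δ/(1−δ). -/

import Mathlib

open scoped Classical

noncomputable section

/-- Probability of an event under a density `p` on a finite outcome space. -/
def probOf {α : Type*} [Fintype α] (p : α → ℝ) (E : Set α) : ℝ :=
  ∑ y, if y ∈ E then p y else 0

/-- Expectation of `f` under a density `p` on a finite outcome space. -/
def expect {α : Type*} [Fintype α] (p : α → ℝ) (f : α → ℝ) : ℝ := ∑ y, p y * f y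

/-- Plackett–Luce probability of a full ranking `σ`, where `σ x` is the (0-based)
rank of item `x`; the 1-based rank of item `x` is `(σ x : ℕ) + 1`. -/
def plProb {n : ℕ} (θ : Fin n → ℝ) (σ : Equiv.Perm (Fin n)) : ℝ :=
  ∏ i : Fin n,
    Real.exp (θ (σ.symm i)) /
      ∑ j ∈ Finset.univ.filter fun j : Fin n => i ≤ j, Real.exp (θ (σ.symm j))

/-- The 1-based rank of item `x` under ranking `σ`, as a real number. -/
def rank1 {n : ℕ} (σ : Equiv.Perm (Fin n)) (x : Fin n) : ℝ := ((σ x : ℕ) : ℝ) + 1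

private lemma pl_sum_eq_one : ∀ (n : ℕ) (w : Fin n → ℝ), (∀ i, 0 < w i) →
    (∑ τ : Equiv.Perm (Fin n), ∏ i : Fin n,
      w (τ i) / ∑ j ∈ Finset.univ.filter (fun j : Fin n => i ≤ j), w (τ j)) = 1 := by
  intro n
  induction n with
  | zero => intro w hw; simp [Finset.univ_unique]
  | succ n IH =>
    intro w hw
    set T : ℝ := ∑ i, w i with hTdef
    have hT : 0 < T := Finset.sum_pos (fun i _ => hw i) ⟨⟨0, Nat.succ_pos n⟩, Finset.mem_univ _⟩
    rw [← Equiv.sum_comp Equiv.Perm.decomposeFin.symm, Fintype.sum_prod_type]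
    have key : ∀ (p : Fin (n+1)) (e : Equiv.Perm (Fin n)),
        (∏ i : Fin (n+1),
          w (Equiv.Perm.decomposeFin.symm (p, e) i) /
            ∑ j ∈ Finset.univ.filter (fun j : Fin (n+1) => i ≤ j),
              w (Equiv.Perm.decomposeFin.symm (p, e) j))
        = (w p / T) *
          ∏ x : Fin n, (fun y : Fin n => w (Equiv.swap 0 p y.succ)) (e x) /
            ∑ y ∈ Finset.univ.filter (fun y : Fin n => x ≤ y),
              (fun y : Fin n => w (Equiv.swap 0 p y.succ)) (e y) := by
      intro p e
      rw [Fin.prod_univ_succ]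
      congr 1
      · rw [Equiv.Perm.decomposeFin_symm_apply_zero]
        congr 1
        rw [Finset.filter_true_of_mem (fun j _ => Fin.zero_le j)]
        exact Equiv.sum_comp _ w
      · refine Finset.prod_congr rfl fun x _ => ?_
        rw [Equiv.Perm.decomposeFin_symm_apply_succ]
        congr 1
        rw [Finset.sum_filter, Finset.sum_filter, Fin.sum_univ_succ]
        simp [Fin.le_zero_iff, Fin.succ_ne_zero, Fin.succ_le_succ_iff,
          Equiv.Perm.decomposeFin_symm_apply_succ]
    calc ∑ p : Fin (n+1), ∑ e : Equiv.Perm (Fin n),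
          ∏ i : Fin (n+1),
            w (Equiv.Perm.decomposeFin.symm (p, e) i) /
              ∑ j ∈ Finset.univ.filter (fun j : Fin (n+1) => i ≤ j),
                w (Equiv.Perm.decomposeFin.symm (p, e) j)
        = ∑ p : Fin (n+1), (w p / T) *
            ∑ e : Equiv.Perm (Fin n), ∏ x : Fin n,
              (fun y : Fin n => w (Equiv.swap 0 p y.succ)) (e x) /
                ∑ y ∈ Finset.univ.filter (fun y : Fin n => x ≤ y),
                  (fun y : Fin n => w (Equiv.swap 0 p y.succ)) (e y) := by
          refine Finset.sum_congr rfl fun p _ => ?_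
          rw [Finset.mul_sum]
          exact Finset.sum_congr rfl fun e _ => key p e
      _ = ∑ p : Fin (n+1), (w p / T) * 1 := by
          refine Finset.sum_congr rfl fun p _ => ?_
          rw [IH (fun y : Fin n => w (Equiv.swap 0 p y.succ)) (fun y => hw _)]
      _ = 1 := by
          simp only [mul_one]
          rw [← Finset.sum_div, div_self hT.ne']

private lemma pl_sum_le_one : ∀ (n : ℕ) (w : Fin n → ℝ), (∀ i, 0 < w i) →
    ∀ (c : ℝ), 0 ≤ c → ∀ (m : ℕ),
    (∑ τ : Equiv.Perm (Fin n), ∏ i : Fin n,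
      w (τ i) / ((if (i : ℕ) < m then c else 0) +
        ∑ j ∈ Finset.univ.filter (fun j : Fin n => i ≤ j), w (τ j))) ≤ 1 := by
  intro n
  induction n with
  | zero => intro w hw c hc m; simp [Finset.univ_unique]
  | succ n IH =>
    intro w hw c hc m
    set T : ℝ := ∑ i, w i with hTdef
    have hT : 0 < T := Finset.sum_pos (fun i _ => hw i) ⟨⟨0, Nat.succ_pos n⟩, Finset.mem_univ _⟩
    have hc0 : (0:ℝ) ≤ (if (0:ℕ) < m then c else 0) := by split <;> simp [hc]
    rw [← Equiv.sum_comp Equiv.Perm.decomposeFin.symm, Fintype.sum_prod_type]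
    have key : ∀ (p : Fin (n+1)) (e : Equiv.Perm (Fin n)),
        (∏ i : Fin (n+1),
          w (Equiv.Perm.decomposeFin.symm (p, e) i) /
            ((if (i : ℕ) < m then c else 0) +
              ∑ j ∈ Finset.univ.filter (fun j : Fin (n+1) => i ≤ j),
                w (Equiv.Perm.decomposeFin.symm (p, e) j)))
        = (w p / ((if (0:ℕ) < m then c else 0) + T)) *
          ∏ x : Fin n, (fun y : Fin n => w (Equiv.swap 0 p y.succ)) (e x) /
            ((if (x : ℕ) < m - 1 then c else 0) +
              ∑ y ∈ Finset.univ.filter (fun y : Fin n => x ≤ y),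
                (fun y : Fin n => w (Equiv.swap 0 p y.succ)) (e y)) := by
      intro p e
      rw [Fin.prod_univ_succ]
      congr 1
      · rw [Equiv.Perm.decomposeFin_symm_apply_zero]
        have h2 : (∑ j ∈ Finset.univ.filter (fun j : Fin (n+1) => (0 : Fin (n+1)) ≤ j),
            w (Equiv.Perm.decomposeFin.symm (p, e) j)) = T := by
          rw [Finset.filter_true_of_mem (fun j _ => Fin.zero_le j)]
          exact Equiv.sum_comp _ w
        rw [h2]
        norm_num
        congr
      · refine Finset.prod_congr rfl fun x _ => ?_
        rw [Equiv.Perm.decomposeFin_symm_apply_succ]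
        congr 2
        · rw [Fin.val_succ]
          exact if_congr (by omega) rfl rfl
        rw [Finset.sum_filter, Finset.sum_filter, Fin.sum_univ_succ]
        simp [Fin.le_zero_iff, Fin.succ_ne_zero, Fin.succ_le_succ_iff,
          Equiv.Perm.decomposeFin_symm_apply_succ]
    calc ∑ p : Fin (n+1), ∑ e : Equiv.Perm (Fin n),
          ∏ i : Fin (n+1),
            w (Equiv.Perm.decomposeFin.symm (p, e) i) /
              ((if (i : ℕ) < m then c else 0) +
                ∑ j ∈ Finset.univ.filter (fun j : Fin (n+1) => i ≤ j),
                  w (Equiv.Perm.decomposeFin.symm (p, e) j))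
        = ∑ p : Fin (n+1), (w p / ((if (0:ℕ) < m then c else 0) + T)) *
            ∑ e : Equiv.Perm (Fin n), ∏ x : Fin n,
              (fun y : Fin n => w (Equiv.swap 0 p y.succ)) (e x) /
                ((if (x : ℕ) < m - 1 then c else 0) +
                  ∑ y ∈ Finset.univ.filter (fun y : Fin n => x ≤ y),
                    (fun y : Fin n => w (Equiv.swap 0 p y.succ)) (e y)) := by
          refine Finset.sum_congr rfl fun p _ => ?_
          rw [Finset.mul_sum]
          exact Finset.sum_congr rfl fun e _ => key p e
      _ ≤ ∑ p : Fin (n+1), (w p / ((if (0:ℕ) < m then c else 0) + T)) * 1 := by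
          refine Finset.sum_le_sum fun p _ => ?_
          refine mul_le_mul_of_nonneg_left ?_ (div_nonneg (hw p).le (by linarith))
          exact IH (fun y : Fin n => w (Equiv.swap 0 p y.succ)) (fun y => hw _) c hc (m - 1)
      _ ≤ ∑ p : Fin (n+1), w p / T := by
          refine Finset.sum_le_sum fun p _ => ?_
          rw [mul_one]
          exact div_le_div_of_nonneg_left (hw p).le hT (by linarith)
      _ = 1 := by rw [← Finset.sum_div, div_self hT.ne']

-- `k.succAbove y ≤ k ↔ y < k`
private lemma succAbove_le_self_iff {n : ℕ} (k : Fin (n+1)) (y : Fin n) :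
    k.succAbove y ≤ k ↔ (y : ℕ) < (k : ℕ) := by
  constructor
  · intro h
    have h' : k.succAbove y < k := lt_of_le_of_ne h (Fin.succAbove_ne k y)
    have := (Fin.succAbove_lt_iff_castSucc_lt k y).mp h'
    simpa [Fin.lt_def] using this
  · intro h
    have h' : Fin.castSucc y < k := by simpa [Fin.lt_def] using h
    rw [Fin.succAbove_of_castSucc_lt _ _ h']
    exact h'.le

private lemma pl_fiber_bound (n : ℕ) (w : Fin (n+1) → ℝ) (hw : ∀ i, 0 < w i)
    (a b : ℝ) (ha : 0 < a) (haw : ∀ i, a ≤ w i) (hwb : ∀ i, w i ≤ b) (x k : Fin (n+1)) :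
    (∑ τ ∈ Finset.univ.filter (fun τ : Equiv.Perm (Fin (n+1)) => τ k = x),
      ∏ i : Fin (n+1), w (τ i) / ∑ j ∈ Finset.univ.filter (fun j : Fin (n+1) => i ≤ j), w (τ j))
      ≤ b / (((n + 1 - (k : ℕ) : ℕ) : ℝ) * a) := by
  have hb : 0 < b := lt_of_lt_of_le ha (le_trans (haw x) (hwb x))
  -- cardinality of the tail positions
  have hcard : (Finset.univ.filter (fun j : Fin (n+1) => k ≤ j)).card = n + 1 - (k : ℕ) := by
    have : Finset.univ.filter (fun j : Fin (n+1) => k ≤ j) = Finset.Ici k := by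
      ext j; simp
    rw [this, Fin.card_Ici]
  have hkn : (k : ℕ) < n + 1 := k.isLt
  have hca : 0 < ((n + 1 - (k : ℕ) : ℕ) : ℝ) * a := by
    have : 0 < n + 1 - (k : ℕ) := by omega
    positivity
  -- the head factor bound and nonnegativity of the rest
  have hhead : ∀ τ ∈ Finset.univ.filter (fun τ : Equiv.Perm (Fin (n+1)) => τ k = x),
      w (τ k) / (∑ j ∈ Finset.univ.filter (fun j : Fin (n+1) => k ≤ j), w (τ j))
        ≤ b / (((n + 1 - (k : ℕ) : ℕ) : ℝ) * a) := by
    intro τ _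
    refine div_le_div₀ hb.le (hwb _) hca ?_
    calc ((n + 1 - (k : ℕ) : ℕ) : ℝ) * a
        = (Finset.univ.filter (fun j : Fin (n+1) => k ≤ j)).card • a := by
          rw [hcard, nsmul_eq_mul]
      _ ≤ ∑ j ∈ Finset.univ.filter (fun j : Fin (n+1) => k ≤ j), w (τ j) :=
          Finset.card_nsmul_le_sum _ _ _ (fun j _ => haw (τ j))
  -- the rest of the product sums to at most one
  have hrest : (∑ τ ∈ Finset.univ.filter (fun τ : Equiv.Perm (Fin (n+1)) => τ k = x),
      ∏ y : Fin n, w (τ (k.succAbove y)) /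
        ∑ j ∈ Finset.univ.filter (fun j : Fin (n+1) => k.succAbove y ≤ j), w (τ j)) ≤ 1 := by
    have key : (∑ e : Equiv.Perm (Fin n), ∏ y : Fin n,
        (fun z : Fin n => w (x.succAbove z)) (e y) /
          ((if (y : ℕ) < (k : ℕ) then w x else 0) +
            ∑ z ∈ Finset.univ.filter (fun z : Fin n => y ≤ z),
              (fun z : Fin n => w (x.succAbove z)) (e z)))
        = ∑ τ ∈ Finset.univ.filter (fun τ : Equiv.Perm (Fin (n+1)) => τ k = x),
          ∏ y : Fin n, w (τ (k.succAbove y)) /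
            ∑ j ∈ Finset.univ.filter (fun j : Fin (n+1) => k.succAbove y ≤ j), w (τ j) := by
      refine Finset.sum_bij
        (fun (e : Equiv.Perm (Fin n)) _ =>
          ((finSuccEquiv' k).trans (e.optionCongr)).trans (finSuccEquiv' x).symm)
        ?_ ?_ ?_ ?_
      · intro e _
        simp [Equiv.trans_apply, finSuccEquiv'_at, finSuccEquiv'_symm_none]
      · intro e1 _ e2 _ h
        ext y
        have h1 := congrArg (fun τ : Equiv.Perm (Fin (n+1)) => τ (k.succAbove y)) h
        simp only [Equiv.trans_apply, finSuccEquiv'_succAbove, Equiv.optionCongr_apply,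
          Option.map_some, finSuccEquiv'_symm_some] at h1
        exact congrArg Fin.val (Fin.succAbove_right_injective h1)
      · intro τ hτ
        simp only [Finset.mem_filter, Finset.mem_univ, true_and] at hτ
        set E : Option (Fin n) ≃ Option (Fin n) :=
          (((finSuccEquiv' k).symm.trans (τ : Equiv.Perm (Fin (n+1)))).trans (finSuccEquiv' x))
          with hE
        have hEnone : E none = none := by
          simp [hE, Equiv.trans_apply, finSuccEquiv'_symm_none, hτ, finSuccEquiv'_at]
        have hEsome : ∀ y : Fin n, E (some y) = some (E.removeNone y) := by
          intro y
          have hex : ∃ z, E (some y) = some z := by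
            cases h : E (some y) with
            | none =>
              exfalso
              have : (some y : Option (Fin n)) = none := E.injective (h.trans hEnone.symm)
              simp at this
            | some z => exact ⟨z, rfl⟩
          exact (Equiv.removeNone_some E hex).symm
        have hτs : ∀ z : Fin n, τ (k.succAbove z) = x.succAbove (E.removeNone z) := by
          intro z
          have h1 : E (some z) = finSuccEquiv' x (τ (k.succAbove z)) := by
            simp [hE, Equiv.trans_apply, finSuccEquiv'_symm_some]
          have h2 := (hEsome z).symm.trans h1
          have := congrArg (finSuccEquiv' x).symm h2
          simpa [finSuccEquiv'_symm_some] using this.symm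
        refine ⟨E.removeNone, Finset.mem_univ _, ?_⟩
        ext i
        rcases eq_or_ne i k with rfl | hik
        · simp [Equiv.trans_apply, finSuccEquiv'_at, finSuccEquiv'_symm_none, hτ]
        · obtain ⟨z, rfl⟩ := Fin.exists_succAbove_eq hik
          simp only [Equiv.trans_apply, finSuccEquiv'_succAbove, Equiv.optionCongr_apply,
            Option.map_some, finSuccEquiv'_symm_some]
          exact congrArg Fin.val (hτs z).symm
      · intro e _
        refine Finset.prod_congr rfl fun y _ => ?_
        have hnum : ((((finSuccEquiv' k).trans (e.optionCongr)).trans (finSuccEquiv' x).symm : Equiv.Perm (Fin (n+1)))) (k.succAbove y) = x.succAbove (e y) := by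
          simp [Equiv.trans_apply, finSuccEquiv'_succAbove, finSuccEquiv'_symm_some]
        rw [hnum]
        congr 1
        rw [Finset.sum_filter, Finset.sum_filter, Fin.sum_univ_succAbove _ k]
        have h0 : ((if k.succAbove y ≤ k then
            w ((((finSuccEquiv' k).trans (e.optionCongr)).trans (finSuccEquiv' x).symm :
              Equiv.Perm (Fin (n+1))) k) else 0) : ℝ)
            = (if (y : ℕ) < (k : ℕ) then w x else 0) := by
          have hk : (((finSuccEquiv' k).trans (e.optionCongr)).trans (finSuccEquiv' x).symm :
              Equiv.Perm (Fin (n+1))) k = x := by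
            simp [Equiv.trans_apply, finSuccEquiv'_at, finSuccEquiv'_symm_none]
          rw [hk]
          exact if_congr (succAbove_le_self_iff k y) rfl rfl
        rw [h0]
        congr 1
        refine Finset.sum_congr rfl fun z _ => ?_
        have hz : (((finSuccEquiv' k).trans (e.optionCongr)).trans (finSuccEquiv' x).symm :
            Equiv.Perm (Fin (n+1))) (k.succAbove z) = x.succAbove (e z) := by
          simp [Equiv.trans_apply, finSuccEquiv'_succAbove, finSuccEquiv'_symm_some]
        rw [hz]
        exact if_congr Fin.succAbove_le_succAbove_iff.symm rfl rfl
    rw [← key]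
    exact pl_sum_le_one n (fun z => w (x.succAbove z)) (fun z => hw _) (w x) (hw x).le (k : ℕ)
  -- put it together
  calc (∑ τ ∈ Finset.univ.filter (fun τ : Equiv.Perm (Fin (n+1)) => τ k = x),
        ∏ i : Fin (n+1), w (τ i) / ∑ j ∈ Finset.univ.filter (fun j : Fin (n+1) => i ≤ j), w (τ j))
      = ∑ τ ∈ Finset.univ.filter (fun τ : Equiv.Perm (Fin (n+1)) => τ k = x),
          (w (τ k) / ∑ j ∈ Finset.univ.filter (fun j : Fin (n+1) => k ≤ j), w (τ j)) *
          ∏ y : Fin n, w (τ (k.succAbove y)) /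
            ∑ j ∈ Finset.univ.filter (fun j : Fin (n+1) => k.succAbove y ≤ j), w (τ j) := by
        refine Finset.sum_congr rfl fun τ _ => ?_
        exact Fin.prod_univ_succAbove _ k
    _ ≤ ∑ τ ∈ Finset.univ.filter (fun τ : Equiv.Perm (Fin (n+1)) => τ k = x),
          (b / (((n + 1 - (k : ℕ) : ℕ) : ℝ) * a)) *
          ∏ y : Fin n, w (τ (k.succAbove y)) /
            ∑ j ∈ Finset.univ.filter (fun j : Fin (n+1) => k.succAbove y ≤ j), w (τ j) := by
        refine Finset.sum_le_sum fun τ hτ => ?_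
        refine mul_le_mul_of_nonneg_right (hhead τ hτ) ?_
        refine Finset.prod_nonneg fun y _ => div_nonneg (hw _).le ?_
        exact Finset.sum_nonneg fun j _ => (hw _).le
    _ ≤ (b / (((n + 1 - (k : ℕ) : ℕ) : ℝ) * a)) * 1 := by
        rw [← Finset.mul_sum]
        exact mul_le_mul_of_nonneg_left hrest (div_nonneg hb.le hca.le)
    _ = b / (((n + 1 - (k : ℕ) : ℕ) : ℝ) * a) := mul_one _

/-- for a PL(θ) ranking with `‖θ‖_∞ ≤ B`, distinct items `i ≠ j`
and `δ ∈ [0,1)`, `P(min{σ(i),σ(j)} ≥ δ·n) ≥ 1 − 2e^{3B}·δ/(1−δ)`. -/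
theorem pl_min_rank_tail_bound
    (n : ℕ) (B : ℝ) (θ : Fin n → ℝ) (hθ : ∀ i, |θ i| ≤ B)
    (i j : Fin n) (hij : i ≠ j) (δ : ℝ) (hδ0 : 0 ≤ δ) (hδ1 : δ < 1) :
    1 - 2 * Real.exp (3 * B) * δ / (1 - δ) ≤
      probOf (plProb θ)
        {σ : Equiv.Perm (Fin n) | δ * (n : ℝ) ≤ min (rank1 σ i) (rank1 σ j)} := by
  set w : Fin n → ℝ := fun t => Real.exp (θ t) with hwdef
  have hw : ∀ t, 0 < w t := fun t => Real.exp_pos _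
  set a : ℝ := Real.exp (-B) with hadef
  set b : ℝ := Real.exp B with hbdef
  have ha : 0 < a := Real.exp_pos _
  have hb : 0 < b := Real.exp_pos _
  have haw : ∀ t, a ≤ w t := fun t => Real.exp_le_exp.mpr (neg_le_of_abs_le (hθ t))
  have hwb : ∀ t, w t ≤ b := fun t => Real.exp_le_exp.mpr (le_of_abs_le (hθ t))
  have hB : 0 ≤ B := le_trans (abs_nonneg _) (hθ i)
  have hδ' : (0:ℝ) < 1 - δ := by linarith
  have hnpos : (0:ℝ) < (n:ℝ) := by exact_mod_cast i.pos
  set F : Equiv.Perm (Fin n) → ℝ := fun τ => ∏ t : Fin n,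
    w (τ t) / ∑ s ∈ Finset.univ.filter (fun s : Fin n => t ≤ s), w (τ s) with hFdef
  have hplF : ∀ σ : Equiv.Perm (Fin n), plProb θ σ = F σ⁻¹ := by
    intro σ; rw [Equiv.Perm.inv_def]; rfl
  have hp : ∀ σ, 0 ≤ plProb θ σ := by
    intro σ
    refine Finset.prod_nonneg fun t _ => div_nonneg (Real.exp_pos _).le ?_
    exact Finset.sum_nonneg fun s _ => (Real.exp_pos _).le
  -- total probability is 1
  have htot : (∑ σ : Equiv.Perm (Fin n), plProb θ σ) = 1 := by
    have h1 : (∑ σ : Equiv.Perm (Fin n), plProb θ σ)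
        = ∑ σ : Equiv.Perm (Fin n), F ((Equiv.inv (Equiv.Perm (Fin n))) σ) :=
      Finset.sum_congr rfl fun σ _ => by rw [hplF σ]; rfl
    rw [h1, Equiv.sum_comp (Equiv.inv (Equiv.Perm (Fin n))) F]
    exact pl_sum_eq_one n w hw
  -- fiber bound in terms of σ
  have hfiber : ∀ (x k : Fin n),
      (∑ σ ∈ Finset.univ.filter (fun σ : Equiv.Perm (Fin n) => σ x = k), plProb θ σ)
        ≤ b / (((n - (k : ℕ) : ℕ) : ℝ) * a) := by
    intro x k
    have hswap : (∑ σ ∈ Finset.univ.filter (fun σ : Equiv.Perm (Fin n) => σ x = k), plProb θ σ)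
        = ∑ τ ∈ Finset.univ.filter (fun τ : Equiv.Perm (Fin n) => τ k = x), F τ := by
      refine Finset.sum_nbij' (fun σ => σ⁻¹) (fun τ => τ⁻¹) ?_ ?_ ?_ ?_ ?_
      · intro σ hσ
        simp only [Finset.mem_filter, Finset.mem_univ, true_and] at hσ ⊢
        rw [← hσ]; exact σ.symm_apply_apply x
      · intro τ hτ
        simp only [Finset.mem_filter, Finset.mem_univ, true_and] at hτ ⊢
        rw [← hτ]; exact τ.symm_apply_apply k
      · intro σ _; simp
      · intro τ _; simp
      · intro σ _; exact hplF σ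
    rw [hswap]
    obtain ⟨m, rfl⟩ : ∃ m, n = m + 1 := ⟨(n : ℕ) - 1, by have := i.pos; omega⟩
    exact pl_fiber_bound m w hw a b ha haw hwb x k
  -- bound on the probability that item x has small rank
  have hbad : ∀ x : Fin n,
      probOf (plProb θ) {σ : Equiv.Perm (Fin n) | rank1 σ x < δ * n}
        ≤ Real.exp (2 * B) * δ / (1 - δ) := by
    intro x
    set C : ℝ := b / (((n:ℝ) * (1 - δ)) * a) with hCdef
    have hC : 0 ≤ C := by positivity
    have step1 : probOf (plProb θ) {σ : Equiv.Perm (Fin n) | rank1 σ x < δ * n}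
        = ∑ k : Fin n, ∑ σ : Equiv.Perm (Fin n),
            if σ x = k then (if ((k:ℕ):ℝ) + 1 < δ * n then plProb θ σ else 0) else 0 := by
      rw [probOf, Finset.sum_comm]
      refine Finset.sum_congr rfl fun σ _ => ?_
      rw [Finset.sum_ite_eq]
      simp [rank1]
      congr
    have step2 : ∀ k : Fin n,
        (∑ σ : Equiv.Perm (Fin n),
          if σ x = k then (if ((k:ℕ):ℝ) + 1 < δ * n then plProb θ σ else 0) else 0)
          ≤ if ((k:ℕ):ℝ) + 1 < δ * n then C else 0 := by
      intro k
      by_cases hk : ((k:ℕ):ℝ) + 1 < δ * n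
      · simp only [hk, if_true]
        have he : (∑ σ : Equiv.Perm (Fin n), if σ x = k then plProb θ σ else 0)
            = ∑ σ ∈ Finset.univ.filter (fun σ : Equiv.Perm (Fin n) => σ x = k), plProb θ σ :=
          (Finset.sum_filter _ _).symm
        refine le_trans (he ▸ hfiber x k) ?_
        have hkn : (k : ℕ) < n := k.isLt
        have hcast : ((n - (k : ℕ) : ℕ) : ℝ) = (n:ℝ) - ((k:ℕ):ℝ) := by
          push_cast [Nat.cast_sub hkn.le]; ring
        have hge : ((n:ℝ) * (1 - δ)) * a ≤ (((n - (k : ℕ) : ℕ) : ℝ)) * a := by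
          refine mul_le_mul_of_nonneg_right ?_ ha.le
          rw [hcast]; nlinarith
        exact div_le_div_of_nonneg_left hb.le (by positivity) hge
      · simp [hk]
    have hcard : ((Finset.univ.filter
        (fun k : Fin n => ((k:ℕ):ℝ) + 1 < δ * n)).card : ℝ) ≤ δ * n := by
      have h1 : (Finset.univ.filter (fun k : Fin n => ((k:ℕ):ℝ) + 1 < δ * n)).card
          ≤ (Finset.range ⌊δ * (n:ℝ)⌋₊).card := by
        refine Finset.card_le_card_of_injOn (fun k => (k : ℕ)) ?_ ?_
        · intro k hk
          simp only [Finset.mem_coe, Finset.mem_filter, Finset.mem_univ, true_and] at hk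
          simp only [Finset.mem_coe, Finset.mem_range]
          have : ((k:ℕ) + 1 : ℝ) ≤ δ * n := by push_cast; linarith
          have := Nat.le_floor (α := ℝ) (by exact_mod_cast this)
          omega
        · intro k _ k' _ h; exact Fin.val_injective h
      rw [Finset.card_range] at h1
      calc ((Finset.univ.filter (fun k : Fin n => ((k:ℕ):ℝ) + 1 < δ * n)).card : ℝ)
          ≤ (⌊δ * (n:ℝ)⌋₊ : ℝ) := by exact_mod_cast h1
        _ ≤ δ * n := Nat.floor_le (by positivity)
    have hfinal : (δ * n) * C = Real.exp (2 * B) * δ / (1 - δ) := by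
      have hba : b / a = Real.exp (2 * B) := by
        rw [hbdef, hadef, ← Real.exp_sub]; ring_nf
      rw [hCdef, ← hba]
      field_simp
    calc probOf (plProb θ) {σ : Equiv.Perm (Fin n) | rank1 σ x < δ * n}
        = ∑ k : Fin n, ∑ σ : Equiv.Perm (Fin n),
            if σ x = k then (if ((k:ℕ):ℝ) + 1 < δ * n then plProb θ σ else 0) else 0 := step1
      _ ≤ ∑ k : Fin n, if ((k:ℕ):ℝ) + 1 < δ * n then C else 0 :=
          Finset.sum_le_sum fun k _ => step2 k
      _ = ((Finset.univ.filter (fun k : Fin n => ((k:ℕ):ℝ) + 1 < δ * n)).card : ℝ) * C := by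
          rw [← Finset.sum_filter, Finset.sum_const, nsmul_eq_mul]
      _ ≤ (δ * n) * C := mul_le_mul_of_nonneg_right hcard hC
      _ = Real.exp (2 * B) * δ / (1 - δ) := hfinal
  -- union bound
  have hsplit : (1:ℝ) ≤
      probOf (plProb θ) {σ : Equiv.Perm (Fin n) | δ * (n:ℝ) ≤ min (rank1 σ i) (rank1 σ j)}
      + (probOf (plProb θ) {σ : Equiv.Perm (Fin n) | rank1 σ i < δ * n}
      + probOf (plProb θ) {σ : Equiv.Perm (Fin n) | rank1 σ j < δ * n}) := by
    rw [probOf, probOf, probOf, ← Finset.sum_add_distrib, ← Finset.sum_add_distrib, ← htot]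
    refine Finset.sum_le_sum fun σ _ => ?_
    have hnn : ∀ (c : Prop) (inst : Decidable c), 0 ≤ (if c then plProb θ σ else 0) := by
      intro c inst; split
      · exact hp σ
      · exact le_refl 0
    by_cases hE : δ * (n:ℝ) ≤ min (rank1 σ i) (rank1 σ j)
    · have h1 : (if σ ∈ {σ : Equiv.Perm (Fin n) | δ * (n:ℝ) ≤ min (rank1 σ i) (rank1 σ j)}
          then plProb θ σ else 0) = plProb θ σ := if_pos hE
      rw [h1]
      have := hnn (σ ∈ {σ : Equiv.Perm (Fin n) | rank1 σ i < δ * n}) inferInstance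
      have := hnn (σ ∈ {σ : Equiv.Perm (Fin n) | rank1 σ j < δ * n}) inferInstance
      linarith
    · push_neg at hE
      rcases min_lt_iff.mp hE with hlt | hlt
      · have h1 : (if σ ∈ {σ : Equiv.Perm (Fin n) | rank1 σ i < δ * n}
            then plProb θ σ else 0) = plProb θ σ := if_pos hlt
        rw [h1]
        have := hnn (σ ∈ {σ : Equiv.Perm (Fin n) | δ * (n:ℝ) ≤ min (rank1 σ i) (rank1 σ j)}) inferInstance
        have := hnn (σ ∈ {σ : Equiv.Perm (Fin n) | rank1 σ j < δ * n}) inferInstance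
        linarith
      · have h1 : (if σ ∈ {σ : Equiv.Perm (Fin n) | rank1 σ j < δ * n}
            then plProb θ σ else 0) = plProb θ σ := if_pos hlt
        rw [h1]
        have := hnn (σ ∈ {σ : Equiv.Perm (Fin n) | δ * (n:ℝ) ≤ min (rank1 σ i) (rank1 σ j)}) inferInstance
        have := hnn (σ ∈ {σ : Equiv.Perm (Fin n) | rank1 σ i < δ * n}) inferInstance
        linarith
  have h23 : Real.exp (2 * B) * δ / (1 - δ) ≤ Real.exp (3 * B) * δ / (1 - δ) := by
    have : Real.exp (2 * B) ≤ Real.exp (3 * B) := Real.exp_le_exp.mpr (by linarith)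
    gcongr
  have hbi := hbad i
  have hbj := hbad j
  have hring : 2 * Real.exp (3 * B) * δ / (1 - δ)
      = 2 * (Real.exp (3 * B) * δ / (1 - δ)) := by ring
  linarith

end
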